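/- Null-space structure underlying Corollary 1. Assume J.mulVec 1 = 1 and G.mulVec 1 = 1, that Dᵀ*D is invertible, and that rank of the n×(2N+M) matrix [J, G, D] equals 2N + M − 1. Then every pair of vectors v₁, v₂ ∈ ℝ^N with (W*J).mulVec v₁ + (W*G).mulVec v₂ = 0 satisfies v₁ = c • 1 and v₂ = −c • 1 for some scalar c ∈ ℝ; that is, the null space of the map (v₁,v₂) ↦ WJv₁ + WGv₂ is spanned by (1, −1). -/

import Mathlib

open Matrix

/-- Null-space structure underlying Corollary 1: under the row-sum and rank conditions,
the null space of (v₁, v₂) ↦ WJv₁ + WGv₂ is spanned by (1, −1). -/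
theorem nullspace_structure_corollary1
    (n N M : ℕ) (hn : 0 < n) (hN : 0 < N) (hM : 0 < M)
    (J G : Matrix (Fin n) (Fin N) ℝ) (D : Matrix (Fin n) (Fin M) ℝ)
    (hJ1 : J.mulVec 1 = 1) (hG1 : G.mulVec 1 = 1)
    (hDD : IsUnit (Dᵀ * D))
    (W : Matrix (Fin n) (Fin n) ℝ)
    (hW : W = 1 - D * (Dᵀ * D)⁻¹ * Dᵀ)
    (hrank : (Matrix.fromCols J (Matrix.fromCols G D)).rank = 2 * N + M - 1) :
    ∀ v₁ v₂ : Fin N → ℝ, (W * J).mulVec v₁ + (W * G).mulVec v₂ = 0 →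
      ∃ c : ℝ, v₁ = c • (1 : Fin N → ℝ) ∧ v₂ = -c • (1 : Fin N → ℝ) := by
  intro v₁ v₂ hv
  set A := Matrix.fromCols J (Matrix.fromCols G D) with hA
  -- nullity of A is 1
  have hrn := LinearMap.finrank_range_add_finrank_ker A.mulVecLin
  rw [Module.finrank_fintype_fun_eq_card] at hrn
  have hcard : Fintype.card (Fin N ⊕ (Fin N ⊕ Fin M)) = 2 * N + M := by
    simp [Fintype.card_sum]; ring
  rw [hcard] at hrn
  have hkerdim : Module.finrank ℝ (LinearMap.ker A.mulVecLin) = 1 := by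
    have : A.rank = Module.finrank ℝ (LinearMap.range A.mulVecLin) := rfl
    omega
  -- the vector (1, -1, 0) lies in the kernel
  have hu0mem : (Sum.elim (1 : Fin N → ℝ) (Sum.elim (-1 : Fin N → ℝ) (0 : Fin M → ℝ))) ∈
      LinearMap.ker A.mulVecLin := by
    simp only [LinearMap.mem_ker, mulVecLin_apply, hA, fromCols_mulVec_sumElim]
    rw [hJ1, Matrix.mulVec_neg, hG1, Matrix.mulVec_zero]
    abel
  have hu0ne : (Sum.elim (1 : Fin N → ℝ) (Sum.elim (-1 : Fin N → ℝ) (0 : Fin M → ℝ))) ≠ 0 := by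
    intro h
    have := congrFun h (Sum.inl ⟨0, hN⟩)
    simp at this
  -- second: hv gives a kernel element
  set x := J.mulVec v₁ + G.mulVec v₂ with hx
  have hWx : W.mulVec x = 0 := by
    rw [← Matrix.mulVec_mulVec, ← Matrix.mulVec_mulVec] at hv
    rw [hx, Matrix.mulVec_add]
    exact hv
  set w : Fin M → ℝ := ((Dᵀ * D)⁻¹ * Dᵀ).mulVec x with hw
  have hxD : x = D.mulVec w := by
    have h1 : (1 : Matrix (Fin n) (Fin n) ℝ).mulVec x - (D * (Dᵀ * D)⁻¹ * Dᵀ).mulVec x = 0 := by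
      rw [← Matrix.sub_mulVec, ← hW]; exact hWx
    have h2 := sub_eq_zero.mp h1
    rw [Matrix.one_mulVec] at h2
    rw [h2, hw, Matrix.mulVec_mulVec, Matrix.mul_assoc]
  have humem : (Sum.elim v₁ (Sum.elim v₂ (-w))) ∈ LinearMap.ker A.mulVecLin := by
    simp only [LinearMap.mem_ker, mulVecLin_apply, hA, fromCols_mulVec_sumElim]
    rw [Matrix.mulVec_neg, ← hxD, hx]
    abel
  -- one-dimensionality: every kernel element is a multiple of u0
  obtain ⟨c, hc⟩ := (finrank_eq_one_iff_of_nonzero'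
      (⟨_, hu0mem⟩ : LinearMap.ker A.mulVecLin) (by simpa using hu0ne)).mp hkerdim ⟨_, humem⟩
  have hc' : c • (Sum.elim (1 : Fin N → ℝ) (Sum.elim (-1 : Fin N → ℝ) (0 : Fin M → ℝ)))
      = Sum.elim v₁ (Sum.elim v₂ (-w)) := congrArg Subtype.val hc
  refine ⟨c, ?_, ?_⟩
  · funext i
    have := congrFun hc' (Sum.inl i)
    simpa using this.symm
  · funext i
    have := congrFun hc' (Sum.inr (Sum.inl i))
    simp at this
    simp [← this]
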